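/- For BiSample-MD, the minimum over all real inputs v ∈ [−1,1] of Pr[M(v)=(0,0)] equals Pr[M(−1)=(0,0)] = (1/2)·(1/(e^ε+1)), and Pr[M(⊥)=(0,0)] = (1/2)·(e^ε/(e^ε+1)), so their ratio is exactly e^ε. -/

import Mathlib

open Real

/-- Probability that BiSample-MD outputs `(0,0)` on a real input `v ∈ [−1,1]`. -/
noncomputable def pvZeroZero (ε v : ℝ) : ℝ :=
  1 / 2 * (1 - ((1 - exp ε) / (1 + exp ε) * (v / 2) + 1 / 2))

/-- For BiSample-MD: the minimum over real inputs `v ∈ [−1,1]` of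
`Pr[M(v)=(0,0)]` is attained at `v = −1` and equals `(1/2)·(1/(e^ε+1))`;
`Pr[M(⊥)=(0,0)] = (1/2)·(e^ε/(e^ε+1))`; and their ratio is exactly `e^ε`. -/
theorem biSampleMD_ratio (ε : ℝ) (hε : 0 < ε) :
    (∀ v ∈ Set.Icc (-1 : ℝ) 1, pvZeroZero ε (-1) ≤ pvZeroZero ε v) ∧
    pvZeroZero ε (-1) = 1 / 2 * (1 / (exp ε + 1)) ∧
    1 / 2 * (1 - 1 / (exp ε + 1)) = 1 / 2 * (exp ε / (exp ε + 1)) ∧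
    (1 / 2 * (1 - 1 / (exp ε + 1))) / pvZeroZero ε (-1) = exp ε := by
  have he : 1 < exp ε := by
    have := Real.exp_lt_exp.mpr hε; simpa using this
  have hpos : (0:ℝ) < 1 + exp ε := by linarith
  have hne : (1 + exp ε) ≠ 0 := ne_of_gt hpos
  have h2 : pvZeroZero ε (-1) = 1 / 2 * (1 / (exp ε + 1)) := by
    unfold pvZeroZero; field_simp; ring
  refine ⟨?_, h2, ?_, ?_⟩
  · intro v hv
    obtain ⟨h1, _⟩ := hv
    unfold pvZeroZero
    have hc : (1 - exp ε) / (1 + exp ε) ≤ 0 :=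
      div_nonpos_of_nonpos_of_nonneg (by linarith) (by linarith)
    have : (1 - exp ε) / (1 + exp ε) * (v / 2) ≤ (1 - exp ε) / (1 + exp ε) * (-1 / 2) :=
      mul_le_mul_of_nonpos_left (by linarith) hc
    linarith
  · field_simp; ring
  · rw [h2]; field_simp; ring
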